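/- Let q ≥ 2, let μ = p^ℕ be a Bernoulli measure on Ω = {0,…,q−1}^ℕ with all entries of the probability vector p positive, let c: {0,…,q−1} → S¹ be a map into the unit circle, and let g: Ω → ℂ be a measurable function with |g(ω)| = 1 μ-a.e. such that g(σ(ω)) = c(ω₀)·g(ω) for μ-a.e. ω, where σ is the shift. Then g is constant μ-almost surely, and consequently c(i) = 1 for every i ∈ {0,…,q−1}. -/

import Mathlib

open MeasureTheory Filter Topology Set
open scoped ENNReal

noncomputable section

abbrev Torus := UnitAddCircle

/-- The natural projection `ℝ → ℝ/ℤ`. -/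
def toTorus (x : ℝ) : Torus := (x : Torus)

/-- One-sided sequence space on `q` symbols. -/
abbrev Word (q : ℕ) := ℕ → Fin q

/-- The left shift. -/
def shift {q : ℕ} : Word q → Word q := fun ω n => ω (n + 1)

/-- `μ` is the Bernoulli measure `pvec^ℕ`. -/
def IsBernoulli {q : ℕ} (pvec : Fin q → ℝ) (μ : Measure (Word q)) : Prop :=
  IsProbabilityMeasure μ ∧
  ∀ (n : ℕ) (w : Fin n → Fin q),
    μ {ω | ∀ i : Fin n, ω (i : ℕ) = w i} = ∏ i, ENNReal.ofReal (pvec (w i))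

/-- The skew product `T(ω,x) = (σω, x + α(ω₀))`. -/
def skew {q : ℕ} (α : Fin q → Torus) : Word q × Torus → Word q × Torus :=
  fun z => (shift z.1, z.2 + α (z.1 0))

/-- `e(s) = exp(2πis)`. -/
def eC (s : ℝ) : ℂ := Complex.exp (2 * Real.pi * s * Complex.I)

/-! ### Auxiliary material for Statement 8 -/

namespace Stmt8

variable {q : ℕ}

/-- Initial cylinder sets. -/
def cyl (n : ℕ) (w : Fin n → Fin q) : Set (Word q) := {ω | ∀ i : Fin n, ω (i : ℕ) = w i}

lemma measurableSet_cyl {n : ℕ} (w : Fin n → Fin q) : MeasurableSet (cyl n w) := by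
  have h : cyl n w = ⋂ i : Fin n, (fun ω : Word q => ω (i : ℕ)) ⁻¹' {w i} := by
    ext ω; simp [cyl]
  rw [h]
  exact MeasurableSet.iInter fun i =>
    (measurable_pi_apply (i : ℕ)) (measurableSet_singleton _)

def cylSet (q : ℕ) : Set (Set (Word q)) := {s | ∃ n, ∃ w : Fin n → Fin q, s = cyl n w}

lemma cyl_subset_of_le {n m : ℕ} (hnm : n ≤ m) (w : Fin n → Fin q) (v : Fin m → Fin q)
    (h : (cyl n w ∩ cyl m v).Nonempty) : cyl m v ⊆ cyl n w := by
  obtain ⟨ω, hw, hv⟩ := h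
  intro η hη i
  have h1 : ω (i : ℕ) = w i := hw i
  have h2 : ω (i : ℕ) = v ⟨(i : ℕ), lt_of_lt_of_le i.2 hnm⟩ := hv ⟨(i : ℕ), lt_of_lt_of_le i.2 hnm⟩
  have h3 : η (i : ℕ) = v ⟨(i : ℕ), lt_of_lt_of_le i.2 hnm⟩ := hη ⟨(i : ℕ), lt_of_lt_of_le i.2 hnm⟩
  rw [h3, ← h2, h1]

lemma isPiSystem_cylSet : IsPiSystem (cylSet q) := by
  rintro s ⟨n, w, rfl⟩ t ⟨m, v, rfl⟩ hne
  rcases le_total n m with h | h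
  · exact ⟨m, v, by rw [Set.inter_eq_self_of_subset_right (cyl_subset_of_le h w v hne)]⟩
  · refine ⟨n, w, ?_⟩
    rw [Set.inter_comm] at hne ⊢
    rw [Set.inter_eq_self_of_subset_right (cyl_subset_of_le h v w hne)]

lemma generate_cyl :
    (inferInstance : MeasurableSpace (Word q)) = MeasurableSpace.generateFrom (cylSet q) := by
  apply le_antisymm
  · have heval : ∀ (i : ℕ) (j : Fin q),
        MeasurableSet[MeasurableSpace.generateFrom (cylSet q)] {ω : Word q | ω i = j} := by
      intro i j
      have hset : {ω : Word q | ω i = j} =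
          ⋃ w ∈ {w : Fin (i + 1) → Fin q | w (Fin.last i) = j}, cyl (i + 1) w := by
        ext ω
        simp only [Set.mem_iUnion, cyl, Set.mem_setOf_eq]
        constructor
        · intro hω
          exact ⟨fun k => ω (k : ℕ), by simpa [Fin.val_last] using hω, fun k => rfl⟩
        · rintro ⟨w, hw, hcyl⟩
          have := hcyl (Fin.last i)
          rw [hw] at this
          simpa [Fin.val_last] using this
      rw [hset]
      exact MeasurableSet.biUnion (Set.to_countable _)
        (fun w _ => MeasurableSpace.measurableSet_generateFrom ⟨i + 1, w, rfl⟩)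
    have : (inferInstance : MeasurableSpace (Word q)) =
        ⨆ i : ℕ, (inferInstance : MeasurableSpace (Fin q)).comap fun ω : Word q => ω i := rfl
    rw [this]
    apply iSup_le
    intro i s hs
    rcases MeasurableSpace.measurableSet_comap.mp hs with ⟨t, _, rfl⟩
    have : (fun ω : Word q => ω i) ⁻¹' t = ⋃ j ∈ t, {ω : Word q | ω i = j} := by
      ext ω; simp
    rw [this]
    exact MeasurableSet.biUnion (Set.to_countable _) (fun j _ => heval i j)
  · apply MeasurableSpace.generateFrom_le
    rintro s ⟨n, w, rfl⟩
    exact measurableSet_cyl w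

lemma measure_ext_cyl (μ ν : Measure (Word q)) [IsFiniteMeasure μ]
    (h : ∀ n (w : Fin n → Fin q), μ (cyl n w) = ν (cyl n w))
    (huniv : μ Set.univ = ν Set.univ) : μ = ν :=
  MeasureTheory.ext_of_generate_finite (cylSet q) generate_cyl isPiSystem_cylSet
    (by rintro s ⟨n, w, rfl⟩; exact h n w) huniv

lemma measurable_shift : Measurable (shift : Word q → Word q) :=
  measurable_pi_lambda _ fun n => measurable_pi_apply (n + 1)

lemma shift_iterate_apply (n : ℕ) (ω : Word q) (k : ℕ) : (shift^[n]) ω k = ω (k + n) := by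
  induction n generalizing ω with
  | zero => rfl
  | succ m ih =>
    rw [Function.iterate_succ_apply, ih]
    show ω (k + m + 1) = ω (k + (m + 1))
    rw [Nat.add_assoc]

variable {pvec : Fin q → ℝ} {μ : Measure (Word q)}

lemma bern_cyl (hB : IsBernoulli pvec μ) (n : ℕ) (w : Fin n → Fin q) :
    μ (cyl n w) = ∏ i, ENNReal.ofReal (pvec (w i)) := hB.2 n w

lemma cyl_disjoint {n : ℕ} {w v : Fin n → Fin q} (hwv : w ≠ v) :
    Disjoint (cyl n w) (cyl n v) := by
  rw [Set.disjoint_left]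
  intro ω hw hv
  exact hwv (funext fun i => by rw [← hw i, ← hv i])

lemma map_shift_eq (hB : IsBernoulli pvec μ) (hsum : ∑ i, pvec i = 1)
    (hpos : ∀ i, 0 < pvec i) : μ.map shift = μ := by
  haveI := hB.1
  haveI : IsProbabilityMeasure (μ.map shift) :=
    Measure.isProbabilityMeasure_map measurable_shift.aemeasurable
  refine measure_ext_cyl _ _ (fun n w => ?_) (by simp)
  rw [Measure.map_apply measurable_shift (measurableSet_cyl w)]
  have hpre : shift ⁻¹' cyl n w = ⋃ j : Fin q, cyl (n + 1) (Fin.cons j w) := by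
    ext ω
    simp only [Set.mem_preimage, cyl, Set.mem_setOf_eq, Set.mem_iUnion]
    constructor
    · intro h
      refine ⟨ω 0, fun i => ?_⟩
      induction i using Fin.cases with
      | zero => simp
      | succ k =>
        have hk := h k
        simp only [Fin.cons_succ, Fin.val_succ]
        exact hk
    · rintro ⟨j, hj⟩ i
      have := hj i.succ
      rw [Fin.cons_succ] at this
      simpa [Fin.val_succ, shift] using this
  have hdisj : Pairwise (Function.onFun Disjoint fun j : Fin q => cyl (n + 1) (Fin.cons j w)) := by
    intro j j' hjj'
    apply cyl_disjoint
    intro hEq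
    exact hjj' (by simpa using congrFun hEq 0)
  rw [hpre, measure_iUnion hdisj (fun j => measurableSet_cyl _), tsum_fintype]
  have hterm : ∀ j : Fin q, μ (cyl (n + 1) (Fin.cons j w)) =
      ENNReal.ofReal (pvec j) * ∏ i, ENNReal.ofReal (pvec (w i)) := by
    intro j
    rw [bern_cyl hB, Fin.prod_univ_succ]
    simp [Fin.cons_succ]
  simp_rw [hterm]
  rw [← Finset.sum_mul, ← ENNReal.ofReal_sum_of_nonneg (fun i _ => (hpos i).le), hsum,
    ENNReal.ofReal_one, one_mul, bern_cyl hB]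

lemma map_iterate_shift_eq (hB : IsBernoulli pvec μ) (hsum : ∑ i, pvec i = 1)
    (hpos : ∀ i, 0 < pvec i) (n : ℕ) : μ.map (shift^[n]) = μ := by
  induction n with
  | zero => simpa using Measure.map_id
  | succ m ih =>
    rw [Function.iterate_succ, ← Measure.map_map ((measurable_shift).iterate m) measurable_shift,
      map_shift_eq hB hsum hpos, ih]

lemma cyl_append (n m : ℕ) (w : Fin n → Fin q) (v : Fin m → Fin q) :
    ((shift^[n]) ⁻¹' cyl m v) ∩ cyl n w = cyl (n + m) (Fin.append w v) := by
  ext ω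
  simp only [Set.mem_inter_iff, Set.mem_preimage, cyl, Set.mem_setOf_eq]
  constructor
  · rintro ⟨h1, h2⟩ i
    by_cases hi : (i : ℕ) < n
    · have : i = Fin.castAdd m ⟨(i : ℕ), hi⟩ := Fin.ext (by simp)
      rw [this, Fin.append_left]
      exact h2 ⟨(i : ℕ), hi⟩
    · have him : (i : ℕ) - n < m := by omega
      have : i = Fin.natAdd n ⟨(i : ℕ) - n, him⟩ := Fin.ext (by simp; omega)
      rw [this, Fin.append_right]
      have h1' := h1 ⟨(i : ℕ) - n, him⟩
      rw [shift_iterate_apply] at h1'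
      have hco : (i : ℕ) - n + n = (i : ℕ) := by omega
      rw [hco] at h1'
      simp only [Fin.coe_natAdd]
      have hco2 : n + ((i : ℕ) - n) = (i : ℕ) := by omega
      rw [hco2]
      exact h1'
  · intro h
    constructor
    · intro j
      rw [shift_iterate_apply]
      have := h (Fin.natAdd n j)
      rw [Fin.append_right] at this
      simpa [Nat.add_comm] using this
    · intro i
      have := h (Fin.castAdd m i)
      rw [Fin.append_left] at this
      simpa using this

lemma map_iterate_restrict (hB : IsBernoulli pvec μ) (n : ℕ) (w : Fin n → Fin q) :
    (μ.restrict (cyl n w)).map (shift^[n]) = μ (cyl n w) • μ := by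
  haveI := hB.1
  haveI hfin : IsFiniteMeasure ((μ.restrict (cyl n w)).map (shift^[n])) := by
    constructor
    rw [Measure.map_apply (measurable_shift.iterate n) MeasurableSet.univ, Set.preimage_univ,
      Measure.restrict_apply MeasurableSet.univ, Set.univ_inter]
    exact measure_lt_top _ _
  refine measure_ext_cyl _ _ (fun m v => ?_) ?_
  · rw [Measure.map_apply (measurable_shift.iterate n) (measurableSet_cyl v),
      Measure.restrict_apply (((measurable_shift.iterate n)) (measurableSet_cyl v)),
      cyl_append, Measure.smul_apply, smul_eq_mul, bern_cyl hB, bern_cyl hB, bern_cyl hB,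
      Fin.prod_univ_add]
    congr 1
    · exact Finset.prod_congr rfl fun i _ => by simp
    · exact Finset.prod_congr rfl fun i _ => by simp
  · rw [Measure.map_apply (measurable_shift.iterate n) MeasurableSet.univ, Set.preimage_univ,
      Measure.restrict_apply MeasurableSet.univ, Set.univ_inter, Measure.smul_apply,
      smul_eq_mul, measure_univ, mul_one]

/-- The projection onto the first `n` coordinates. -/
def proj (q : ℕ) (n : ℕ) : Word q → (Fin n → Fin q) := fun ω i => ω (i : ℕ)

lemma measurable_proj (n : ℕ) : Measurable (proj q n) :=
  measurable_pi_lambda _ fun i => measurable_pi_apply _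

/-- The filtration by the first `n` coordinates. -/
def filt (q : ℕ) : Filtration ℕ (inferInstance : MeasurableSpace (Word q)) where
  seq n := MeasurableSpace.comap (proj q n) inferInstance
  mono' := by
    intro n m hnm
    show MeasurableSpace.comap (proj q n) inferInstance ≤
      MeasurableSpace.comap (proj q m) inferInstance
    have hfac : proj q n = (fun v (i : Fin n) => v (Fin.castLE hnm i)) ∘ proj q m := rfl
    rw [hfac, ← MeasurableSpace.comap_comp]
    exact MeasurableSpace.comap_mono
      (measurable_iff_comap_le.mp (measurable_pi_lambda _ fun i => measurable_pi_apply _))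
  le' n := measurable_iff_comap_le.mp (measurable_proj n)

lemma iSup_filt (q : ℕ) :
    (⨆ n, (filt q n : MeasurableSpace (Word q))) = (inferInstance : MeasurableSpace (Word q)) := by
  apply le_antisymm
  · exact iSup_le fun n => (filt q).le n
  · have hinst : (inferInstance : MeasurableSpace (Word q)) =
        ⨆ i : ℕ, (inferInstance : MeasurableSpace (Fin q)).comap fun ω : Word q => ω i := rfl
    conv_lhs => rw [hinst]
    apply iSup_le
    intro i
    have hfac : (fun ω : Word q => ω i) = (fun v : Fin (i + 1) → Fin q => v (Fin.last i)) ∘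
        proj q (i + 1) := rfl
    rw [hfac, ← MeasurableSpace.comap_comp]
    refine le_trans (MeasurableSpace.comap_mono
      (measurable_iff_comap_le.mp (measurable_pi_apply _))) ?_
    exact le_iSup (fun n => (filt q n : MeasurableSpace (Word q))) (i + 1)

end Stmt8

/-- If `g` has constant modulus `1` and satisfies the cocycle equation
`g(σω) = c(ω₀)·g(ω)` a.e. over a fully supported Bernoulli base, then `g` is a.s. constant,
and consequently `c(i) = 1` for every symbol `i`. -/
theorem statement8 (q : ℕ) (hq : 2 ≤ q)
    (pvec : Fin q → ℝ) (hpos : ∀ i, 0 < pvec i) (hsum : ∑ i, pvec i = 1)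
    (μ : Measure (Word q)) (hBern : IsBernoulli pvec μ)
    (c : Fin q → ℂ) (hc : ∀ i, ‖c i‖ = 1)
    (g : Word q → ℂ) (hgmeas : Measurable g)
    (hgmod : ∀ᵐ ω ∂μ, ‖g ω‖ = 1)
    (hcocycle : ∀ᵐ ω ∂μ, g (shift ω) = c (ω 0) * g ω) :
    (∃ z : ℂ, ∀ᵐ ω ∂μ, g ω = z) ∧ ∀ i, c i = 1 := by
  classical
  haveI hprob : IsProbabilityMeasure μ := hBern.1
  set I : ℂ := ∫ ω, g ω ∂μ with hIdef
  have hgint : Integrable g μ :=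
    ⟨hgmeas.aestronglyMeasurable, HasFiniteIntegral.of_bounded (C := 1)
      (hgmod.mono fun ω h => by rw [h])⟩
  have hmapn := Stmt8.map_iterate_shift_eq hBern hsum hpos
  have htrans : ∀ (n : ℕ) (P : Word q → Prop), MeasurableSet {ω | P ω} →
      (∀ᵐ ω ∂μ, P ω) → ∀ᵐ ω ∂μ, P ((shift^[n]) ω) := by
    intro n P hPm hP
    exact (MeasureTheory.ae_map_iff (Stmt8.measurable_shift.iterate n).aemeasurable hPm).mp
      (by rwa [hmapn n])
  have hcmeas : ∀ n : ℕ, Measurable (fun ω : Word q => ∏ k : Fin n, c (ω (k : ℕ))) := by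
    intro n
    apply Finset.measurable_prod
    intro k _
    exact (Measurable.of_discrete (f := c)).comp (measurable_pi_apply _)
  have hcne : ∀ i, c i ≠ 0 := by
    intro i h0
    have := hc i
    rw [h0] at this
    simpa using this
  have hiter : ∀ n : ℕ, ∀ᵐ ω ∂μ,
      g ((shift^[n]) ω) = (∏ k : Fin n, c (ω (k : ℕ))) * g ω := by
    intro n
    induction n with
    | zero => exact Filter.Eventually.of_forall (fun ω => by simp)
    | succ m ih =>
      have hPm : MeasurableSet {ω : Word q |
          g ((shift^[m]) ω) = (∏ k : Fin m, c (ω (k : ℕ))) * g ω} :=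
        measurableSet_eq_fun (hgmeas.comp (Stmt8.measurable_shift.iterate m))
          ((hcmeas m).mul hgmeas)
      filter_upwards [htrans 1 _ hPm ih, hcocycle] with ω h1 h2
      rw [Function.iterate_one] at h1
      rw [Function.iterate_succ_apply, h1, h2, Fin.prod_univ_succ]
      simp only [Fin.val_succ, Fin.val_zero]
      show (∏ k : Fin m, c (ω ((k : ℕ) + 1))) * (c (ω 0) * g ω)
          = c (ω 0) * (∏ k : Fin m, c (ω ((k : ℕ) + 1))) * g ω
      ring
  have habsprod : ∀ (n : ℕ) (ω : Word q),
      ‖∏ k : Fin n, c (ω (k : ℕ))‖ = 1 := by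
    intro n ω
    rw [norm_prod]
    exact Finset.prod_eq_one fun k _ => hc _
  have hcylint : ∀ (n : ℕ) (w : Fin n → Fin q),
      ∫ ω in Stmt8.cyl n w, g ω ∂μ
        = (μ (Stmt8.cyl n w)).toReal • ((∏ k, c (w k))⁻¹ * I) := by
    intro n w
    have hae : ∀ᵐ ω ∂(μ.restrict (Stmt8.cyl n w)),
        g ω = (∏ k, c (w k))⁻¹ * g ((shift^[n]) ω) := by
      filter_upwards [ae_restrict_of_ae (hiter n), ae_restrict_mem (Stmt8.measurableSet_cyl w)]
        with ω h1 h2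
      have hpw : (∏ k : Fin n, c (ω (k : ℕ))) = ∏ k, c (w k) :=
        Finset.prod_congr rfl fun k _ => by rw [h2 k]
      rw [hpw] at h1
      rw [h1, inv_mul_cancel_left₀ (Finset.prod_ne_zero_iff.mpr fun k _ => hcne _)]
    rw [integral_congr_ae hae, integral_const_mul]
    have hmap : ∫ ω in Stmt8.cyl n w, g ((shift^[n]) ω) ∂μ
        = (μ (Stmt8.cyl n w)).toReal • I := by
      rw [← integral_map (φ := shift^[n]) (Stmt8.measurable_shift.iterate n).aemeasurable
        hgmeas.aestronglyMeasurable, Stmt8.map_iterate_restrict hBern, integral_smul_measure]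
    rw [hmap, mul_smul_comm]
  have hhmeasM : ∀ n : ℕ, Measurable (fun ω : Word q => (∏ k : Fin n, c (ω (k : ℕ)))⁻¹ * I) :=
    fun n => ((hcmeas n).inv).mul_const I
  have hhint : ∀ n : ℕ, Integrable (fun ω : Word q => (∏ k : Fin n, c (ω (k : ℕ)))⁻¹ * I) μ := by
    intro n
    refine ⟨(hhmeasM n).aestronglyMeasurable, HasFiniteIntegral.of_bounded
      (C := ‖I‖) (Filter.Eventually.of_forall fun ω => ?_)⟩
    rw [norm_mul, norm_inv, habsprod n ω]
    simp
  have hsetint : ∀ (n : ℕ) (s : Set (Word q)), MeasurableSet[Stmt8.filt q n] s →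
      ∫ ω in s, g ω ∂μ = ∫ ω in s, ((∏ k : Fin n, c (ω (k : ℕ)))⁻¹ * I) ∂μ := by
    intro n s hs
    rcases MeasurableSpace.measurableSet_comap.mp hs with ⟨S, _, rfl⟩
    have hdecomp : Stmt8.proj q n ⁻¹' S = ⋃ w ∈ S.toFinite.toFinset, Stmt8.cyl n w := by
      ext ω
      simp only [Set.mem_preimage, Set.mem_iUnion, Set.Finite.mem_toFinset]
      constructor
      · intro hω
        exact ⟨Stmt8.proj q n ω, hω, fun i => rfl⟩
      · rintro ⟨w, hw, hcy⟩
        have : Stmt8.proj q n ω = w := funext fun i => hcy i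
        rwa [this]
    have hdisj : (↑S.toFinite.toFinset : Set (Fin n → Fin q)).Pairwise
        (Function.onFun Disjoint fun w => Stmt8.cyl n w) :=
      fun w _ v _ hwv => Stmt8.cyl_disjoint hwv
    rw [hdecomp,
      integral_biUnion_finset _ (fun w _ => Stmt8.measurableSet_cyl w) hdisj
        (fun w _ => hgint.integrableOn),
      integral_biUnion_finset _ (fun w _ => Stmt8.measurableSet_cyl w) hdisj
        (fun w _ => (hhint n).integrableOn)]
    refine Finset.sum_congr rfl fun w _ => ?_
    rw [hcylint n w]
    have heq : Set.EqOn (fun ω : Word q => (∏ k : Fin n, c (ω (k : ℕ)))⁻¹ * I)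
        (fun _ => (∏ k, c (w k))⁻¹ * I) (Stmt8.cyl n w) := by
      intro ω hω
      simp only
      have : (∏ k : Fin n, c (ω (k : ℕ))) = ∏ k, c (w k) :=
        Finset.prod_congr rfl fun k _ => by rw [hω k]
      rw [this]
    rw [setIntegral_congr_fun (Stmt8.measurableSet_cyl w) heq, setIntegral_const]
    rfl
  have hsupF := Stmt8.iSup_filt q
  have hle := (Stmt8.filt q).le
  have hcondexp : ∀ (L : ℂ →L[ℝ] ℝ) (n : ℕ),
      (fun ω => L ((∏ k : Fin n, c (ω (k : ℕ)))⁻¹ * I)) =ᵐ[μ]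
        μ[(fun ω => L (g ω)) | Stmt8.filt q n] := by
    intro L n
    refine ae_eq_condExp_of_forall_setIntegral_eq (hle n) (L.integrable_comp hgint)
      (fun s _ _ => (L.integrable_comp (hhint n)).integrableOn) (fun s hs hμs => ?_) ?_
    · rw [L.integral_comp_comm ((hhint n).integrableOn),
        L.integral_comp_comm (hgint.integrableOn), ← hsetint n s hs]
    · refine StronglyMeasurable.aestronglyMeasurable ?_
      apply Measurable.stronglyMeasurable
      have hproj : Measurable[Stmt8.filt q n] (Stmt8.proj q n) :=
        measurable_iff_comap_le.mpr le_rfl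
      exact (Measurable.of_discrete
        (f := fun v : Fin n → Fin q => L ((∏ k, c (v k))⁻¹ * I))).comp hproj
  have hlevy : ∀ L : ℂ →L[ℝ] ℝ, ∀ᵐ ω ∂μ,
      Tendsto (fun n => L ((∏ k : Fin n, c (ω (k : ℕ)))⁻¹ * I)) atTop (𝓝 (L (g ω))) := by
    intro L
    have hgm : StronglyMeasurable[⨆ n, (Stmt8.filt q n : MeasurableSpace (Word q))]
        (fun ω => L (g ω)) := by
      rw [hsupF]
      exact (L.continuous.measurable.comp hgmeas).stronglyMeasurable
    have hmain := (L.integrable_comp hgint).tendsto_ae_condExp hgm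
    filter_upwards [hmain, (ae_all_iff).mpr fun n => hcondexp L n] with ω h1 h2
    have heq : (fun n => L ((∏ k : Fin n, c (ω (k : ℕ)))⁻¹ * I))
        = fun n => (μ[(fun ω => L (g ω)) | Stmt8.filt q n]) ω := funext fun n => h2 n
    rw [heq]
    exact h1
  have hconv : ∀ᵐ ω ∂μ, Tendsto (fun n => (∏ k : Fin n, c (ω (k : ℕ)))⁻¹ * I)
      atTop (𝓝 (g ω)) := by
    filter_upwards [hlevy Complex.reCLM, hlevy Complex.imCLM] with ω hre him
    have h1 := ((Complex.continuous_ofReal.tendsto _).comp hre).add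
      (((Complex.continuous_ofReal.tendsto _).comp him).mul_const Complex.I)
    simp only [Function.comp_def, Complex.reCLM_apply, Complex.imCLM_apply,
      Complex.re_add_im] at h1
    exact h1
  haveI : NeBot (ae μ) := ae_neBot.mpr (IsProbabilityMeasure.ne_zero μ)
  have habsI : ‖I‖ = 1 := by
    obtain ⟨ω, h1, h2⟩ := (hconv.and hgmod).exists
    have h3 : Tendsto (fun n => ‖(∏ k : Fin n, c (ω (k : ℕ)))⁻¹ * I‖) atTop
        (𝓝 ‖g ω‖) := (continuous_norm.tendsto _).comp h1
    have h4 : (fun n => ‖(∏ k : Fin n, c (ω (k : ℕ)))⁻¹ * I‖)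
        = fun _ => ‖I‖ := by
      funext n
      rw [norm_mul, norm_inv, habsprod n ω]
      simp
    rw [h4, h2] at h3
    exact tendsto_nhds_unique tendsto_const_nhds h3
  have hIne : I ≠ 0 := by
    intro h0
    rw [h0] at habsI
    simpa using habsI
  have hIconj : I * (starRingEnd ℂ) I = 1 := by
    rw [Complex.mul_conj, Complex.normSq_eq_norm_sq, habsI]
    norm_num
  have hu_int : Integrable (fun ω => (starRingEnd ℂ) I * g ω) μ := hgint.const_mul _
  have hintu : ∫ ω, (starRingEnd ℂ) I * g ω ∂μ = 1 := by
    rw [integral_const_mul, ← hIdef, mul_comm]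
    exact hIconj
  have hre_nonneg : 0 ≤ᵐ[μ] fun ω => 1 - ((starRingEnd ℂ) I * g ω).re := by
    filter_upwards [hgmod] with ω h
    have habs : ‖(starRingEnd ℂ) I * g ω‖ = 1 := by
      rw [norm_mul, Complex.norm_conj, habsI, h, one_mul]
    have hle' : ((starRingEnd ℂ) I * g ω).re ≤ 1 := by
      calc ((starRingEnd ℂ) I * g ω).re ≤ ‖(starRingEnd ℂ) I * g ω‖ :=
            Complex.re_le_norm _
        _ = 1 := habs
    simp only [Pi.zero_apply]
    linarith
  have hure : Integrable (fun ω => ((starRingEnd ℂ) I * g ω).re) μ :=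
    Complex.reCLM.integrable_comp hu_int
  have hf0int : Integrable (fun ω => 1 - ((starRingEnd ℂ) I * g ω).re) μ :=
    (integrable_const 1).sub hure
  have hf0zero : ∫ ω, (1 - ((starRingEnd ℂ) I * g ω).re) ∂μ = 0 := by
    rw [integral_sub (integrable_const 1) hure, integral_const]
    have hint2 : ∫ ω, ((starRingEnd ℂ) I * g ω).re ∂μ = 1 := by
      have h5 : ∫ ω, ((starRingEnd ℂ) I * g ω).re ∂μ
          = Complex.reCLM (∫ ω, (starRingEnd ℂ) I * g ω ∂μ) :=
        Complex.reCLM.integral_comp_comm hu_int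
      rw [hintu] at h5
      simpa using h5
    rw [hint2]
    simp
  have hre1 : ∀ᵐ ω ∂μ, ((starRingEnd ℂ) I * g ω).re = 1 := by
    have h6 := (integral_eq_zero_iff_of_nonneg_ae hre_nonneg hf0int).mp hf0zero
    filter_upwards [h6] with ω h
    have h7 : 1 - ((starRingEnd ℂ) I * g ω).re = 0 := h
    linarith
  have hgz : ∀ᵐ ω ∂μ, g ω = I := by
    filter_upwards [hre1, hgmod] with ω h1 h2
    have habs : ‖(starRingEnd ℂ) I * g ω‖ = 1 := by
      rw [norm_mul, Complex.norm_conj, habsI, h2, one_mul]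
    have hval : (starRingEnd ℂ) I * g ω = 1 := by
      have hsq : ((starRingEnd ℂ) I * g ω).re * ((starRingEnd ℂ) I * g ω).re
          + ((starRingEnd ℂ) I * g ω).im * ((starRingEnd ℂ) I * g ω).im = 1 := by
        have h8 := Complex.sq_norm ((starRingEnd ℂ) I * g ω)
        rw [habs, Complex.normSq_apply] at h8
        nlinarith [h8]
      have him : ((starRingEnd ℂ) I * g ω).im = 0 := by nlinarith [hsq, h1]
      exact Complex.ext (by simpa using h1) (by simpa using him)
    calc g ω = (I * (starRingEnd ℂ) I) * g ω := by rw [hIconj, one_mul]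
      _ = I * ((starRingEnd ℂ) I * g ω) := by ring
      _ = I := by rw [hval, mul_one]
  have hgz_shift : ∀ᵐ ω ∂μ, g (shift ω) = I := by
    have hPm : MeasurableSet {ω : Word q | g ω = I} :=
      measurableSet_eq_fun hgmeas measurable_const
    have h9 := htrans 1 _ hPm hgz
    simpa using h9
  have hcae : ∀ᵐ ω ∂μ, c (ω 0) = 1 := by
    filter_upwards [hcocycle, hgz, hgz_shift] with ω h1 h2 h3
    rw [h2, h3] at h1
    have h10 : c (ω 0) * I = I := h1.symm
    calc c (ω 0) = c (ω 0) * I * I⁻¹ := by field_simp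
      _ = I * I⁻¹ := by rw [h10]
      _ = 1 := by field_simp
  refine ⟨⟨I, hgz⟩, ?_⟩
  intro i
  by_contra hne
  have hsub : {ω : Word q | ω 0 = i} ⊆ {ω : Word q | ¬ c (ω 0) = 1} := by
    intro ω h
    simp only [Set.mem_setOf_eq] at *
    rw [h]
    exact hne
  have h0 : μ {ω : Word q | ω 0 = i} = 0 := measure_mono_null hsub (ae_iff.mp hcae)
  have hcylone : {ω : Word q | ω 0 = i} = Stmt8.cyl 1 (fun _ => i) := by
    ext ω
    simp only [Stmt8.cyl, Set.mem_setOf_eq]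
    constructor
    · intro h k
      have hk : k = 0 := Subsingleton.elim k 0
      rw [hk]
      exact h
    · intro h
      exact h 0
  rw [hcylone, Stmt8.bern_cyl hBern] at h0
  simp only [Finset.prod_const, Finset.card_univ, Fintype.card_fin, pow_one] at h0
  exact (ENNReal.ofReal_pos.mpr (hpos i)).ne' h0

end
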